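/- For every γ ∈ GL_r(F_∞) there exists a constant c₃ > 0 such that for every ω ∈ Ω^r: h(γ(ω)) ≥ c₃·h(ω). (One may take c₃ = (c₂'c₃')^{−1}, where c₂' is the largest absolute value of an entry of γ and c₃' is the largest absolute value of an entry of γ^{−1}.) -/

import Mathlib

noncomputable section

namespace Paper

/-- The sup-norm `|ω| = max_i |ω_i|` of a vector. -/
noncomputable def supNorm {K : Type*} [NormedField K] {m : ℕ} (ω : Fin m → K) : ℝ :=
  ⨆ i, ‖ω i‖

/-- A linear form with coefficients `ℓ i` in `F_∞` is unimodular if its largest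
coefficient has absolute value `1`. -/
def Unimodular {K : Type*} [NormedField K] (Finf : Subfield K) {m : ℕ} (ℓ : Fin m → K) : Prop :=
  (∀ i, ℓ i ∈ Finf) ∧ supNorm ℓ = 1

/-- `h(ω) = |ω|⁻¹ · inf {|ℓ(ω)| : ℓ a unimodular F_∞-linear form}`. -/
noncomputable def hOm {K : Type*} [NormedField K] (Finf : Subfield K) {m : ℕ}
    (ω : Fin m → K) : ℝ :=
  (supNorm ω)⁻¹ *
    sInf {x : ℝ | ∃ ℓ : Fin m → K, Unimodular Finf ℓ ∧ x = ‖∑ i, ℓ i * ω i‖}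

/-- The Drinfeld period domain `Ω^{m+1}`: vectors with `F_∞`-linearly independent entries
and last entry `ξ`. -/
def Omega {K : Type*} [NormedField K] (Finf : Subfield K) (ξ : K) (m : ℕ) :
    Set (Fin (m + 1) → K) :=
  {ω | (∀ c : Fin (m + 1) → K, (∀ i, c i ∈ Finf) → ∑ i, c i * ω i = 0 → ∀ i, c i = 0) ∧
    ω (Fin.last m) = ξ}

/-- `Ω^{m+1}_n = {ω ∈ Ω^{m+1} : h(ω) ≥ |π|^n}` where `|π| = q⁻¹`. -/
def OmegaN {K : Type*} [NormedField K] (Finf : Subfield K) (ξ : K) (q : ℕ) (m n : ℕ) :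
    Set (Fin (m + 1) → K) :=
  {ω | ω ∈ Omega Finf ξ m ∧ ((q : ℝ))⁻¹ ^ n ≤ hOm Finf ω}

/-- The automorphy factor `j(γ,ω) = ξ⁻¹·(last entry of γω)`. -/
noncomputable def jmap {K : Type*} [NormedField K] (ξ : K) {m : ℕ}
    (γ : Matrix (Fin (m + 1)) (Fin (m + 1)) K) (ω : Fin (m + 1) → K) : K :=
  ξ⁻¹ * (γ.mulVec ω) (Fin.last m)

/-- The action `γ(ω) = j(γ,ω)⁻¹·γω` of `GL_{m+1}(F_∞)` on `Ω^{m+1}`. -/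
noncomputable def gact {K : Type*} [NormedField K] (ξ : K) {m : ℕ}
    (γ : Matrix (Fin (m + 1)) (Fin (m + 1)) K) (ω : Fin (m + 1) → K) : Fin (m + 1) → K :=
  fun i => (jmap ξ γ ω)⁻¹ * (γ.mulVec ω) i

section aux
variable {K : Type*} [NormedField K] {n : ℕ}

lemma le_fsup {ι : Type*} [Fintype ι] [Nonempty ι] (f : ι → ℝ) (i : ι) : f i ≤ ⨆ j, f j :=
  le_ciSup (Set.Finite.bddAbove (Set.finite_range f)) i

lemma fsup_le {ι : Type*} [Fintype ι] [Nonempty ι] {f : ι → ℝ} {C : ℝ}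
    (h : ∀ i, f i ≤ C) : (⨆ j, f j) ≤ C := ciSup_le h

lemma le_supNorm (ω : Fin (n+1) → K) (i : Fin (n+1)) : ‖ω i‖ ≤ supNorm ω :=
  le_fsup (fun j => ‖ω j‖) i

lemma supNorm_le {ω : Fin (n+1) → K} {C : ℝ} (h : ∀ i, ‖ω i‖ ≤ C) : supNorm ω ≤ C :=
  fsup_le (f := fun j => ‖ω j‖) h

lemma supNorm_nonneg (ω : Fin (n+1) → K) : 0 ≤ supNorm ω :=
  (norm_nonneg _).trans (le_supNorm ω 0)

lemma exists_supNorm_eq (ω : Fin (n+1) → K) : ∃ i, supNorm ω = ‖ω i‖ := by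
  obtain ⟨i, hi⟩ := Finite.exists_max (fun i => ‖ω i‖)
  exact ⟨i, le_antisymm (supNorm_le hi) (le_supNorm ω i)⟩

lemma supNorm_smul (c : K) (ω : Fin (n+1) → K) :
    supNorm (fun i => c * ω i) = ‖c‖ * supNorm ω := by
  obtain ⟨i, hi⟩ := exists_supNorm_eq ω
  refine le_antisymm (supNorm_le fun j => ?_) ?_
  · rw [norm_mul]
    exact mul_le_mul_of_nonneg_left (le_supNorm ω j) (norm_nonneg c)
  · rw [hi, ← norm_mul]
    exact le_supNorm (fun j => c * ω j) i

variable [IsUltrametricDist K]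

lemma norm_fsum_le {f : Fin (n+1) → K} {C : ℝ} (h : ∀ i, ‖f i‖ ≤ C) :
    ‖∑ i, f i‖ ≤ C :=
  IsUltrametricDist.norm_sum_le_of_forall_le_of_nonempty Finset.univ_nonempty
    (fun i _ => h i)

lemma mulVec_bound (M : Matrix (Fin (n+1)) (Fin (n+1)) K) (ω : Fin (n+1) → K) {C : ℝ}
    (hM : ∀ i j, ‖M i j‖ ≤ C) : supNorm (M.mulVec ω) ≤ C * supNorm ω := by
  refine supNorm_le fun i => ?_
  have : M.mulVec ω i = ∑ j, M i j * ω j := rfl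
  rw [this]
  refine norm_fsum_le fun j => ?_
  rw [norm_mul]
  exact mul_le_mul (hM i j) (le_supNorm ω j) (norm_nonneg _)
    ((norm_nonneg _).trans (hM i j))

lemma vecMul_bound (ℓ : Fin (n+1) → K) (M : Matrix (Fin (n+1)) (Fin (n+1)) K) {C : ℝ}
    (hM : ∀ i j, ‖M i j‖ ≤ C) : supNorm (Matrix.vecMul ℓ M) ≤ C * supNorm ℓ := by
  refine supNorm_le fun j => ?_
  have : Matrix.vecMul ℓ M j = ∑ i, ℓ i * M i j := rfl
  rw [this, mul_comm]
  refine norm_fsum_le fun i => ?_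
  rw [norm_mul]
  exact mul_le_mul (le_supNorm ℓ i) (hM i j) (norm_nonneg _) (supNorm_nonneg ℓ)

end aux

def Sset {K : Type*} [NormedField K] (Finf : Subfield K) {m : ℕ} (v : Fin m → K) : Set ℝ :=
  {x : ℝ | ∃ ℓ : Fin m → K, Unimodular Finf ℓ ∧ x = ‖∑ i, ℓ i * v i‖}

lemma hOm_eq {K : Type*} [NormedField K] (Finf : Subfield K) {m : ℕ} (v : Fin m → K) :
    hOm Finf v = (supNorm v)⁻¹ * sInf (Sset Finf v) := rfl

section main
variable {K : Type*} [NormedField K] {n : ℕ}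

lemma Sset_nonempty (Finf : Subfield K) (v : Fin (n+1) → K) : (Sset Finf v).Nonempty := by
  refine ⟨_, (fun i => if i = 0 then (1:K) else 0), ⟨?_, ?_⟩, rfl⟩
  · intro i; dsimp only; split
    · exact Subfield.one_mem Finf
    · exact Subfield.zero_mem Finf
  · refine le_antisymm (supNorm_le fun i => ?_) ?_
    · split <;> simp
    · have := le_supNorm (fun i => if i = (0 : Fin (n+1)) then (1:K) else 0) 0
      simpa using this

lemma Sset_bddBelow (Finf : Subfield K) (v : Fin (n+1) → K) : BddBelow (Sset Finf v) :=
  ⟨0, by rintro x ⟨ℓ, _, rfl⟩; exact norm_nonneg _⟩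

lemma Sset_sInf_nonneg (Finf : Subfield K) (v : Fin (n+1) → K) : 0 ≤ sInf (Sset Finf v) :=
  le_csInf (Sset_nonempty Finf v) (by rintro x ⟨ℓ, _, rfl⟩; exact norm_nonneg _)

end main

set_option maxHeartbeats 2000000 in
/-- For every `γ ∈ GL_r(F_∞)` there exists `c₃ > 0` such that for every
`ω ∈ Ω^r`:  `h(γ(ω)) ≥ c₃·h(ω)`. -/
theorem statement7
    (p k q : ℕ) (hp : p.Prime) (hqpk : q = p ^ k) (hk : 0 < k)
    {K : Type*} [NormedField K] [CompleteSpace K] [IsAlgClosed K] [IsUltrametricDist K]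
    [CharP K p]
    (t : K) (ht : ‖t‖ = (q : ℝ))
    (Fq : Subfield K) (hFq : (Fq : Set K) = {x : K | x ^ q = x})
    (F : Subfield K) (hF : F = Subfield.closure ((Fq : Set K) ∪ {t}))
    (A : Subring K) (hA : A = Subring.closure ((Fq : Set K) ∪ {t}))
    (Finf : Subfield K) (hFinf : (Finf : Set K) = closure (F : Set K))
    (ξ : K) (hξ : ξ ≠ 0)
    (m : ℕ) (γ : Matrix (Fin (m + 1)) (Fin (m + 1)) K)
    (hγF : ∀ i j, γ i j ∈ Finf) (hγdet : γ.det ≠ 0) :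
    ∃ c₃ : ℝ, 0 < c₃ ∧ ∀ ω ∈ Omega Finf ξ m,
      c₃ * hOm Finf ω ≤ hOm Finf (gact ξ γ ω) := by
  classical
  have hdet : IsUnit γ.det := isUnit_iff_ne_zero.mpr hγdet
  have hMul : γ * γ⁻¹ = 1 := Matrix.mul_nonsing_inv γ hdet
  have hMul' : γ⁻¹ * γ = 1 := Matrix.nonsing_inv_mul γ hdet
  set C2 : ℝ := ⨆ p : Fin (m+1) × Fin (m+1), ‖γ p.1 p.2‖ with hC2def
  set C3 : ℝ := ⨆ p : Fin (m+1) × Fin (m+1), ‖γ⁻¹ p.1 p.2‖ with hC3def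
  have hC2 : ∀ i j, ‖γ i j‖ ≤ C2 := fun i j => le_fsup (fun p => ‖γ p.1 p.2‖) (i, j)
  have hC3 : ∀ i j, ‖γ⁻¹ i j‖ ≤ C3 := fun i j => le_fsup (fun p => ‖γ⁻¹ p.1 p.2‖) (i, j)
  have hC2pos : 0 < C2 := by
    by_contra h
    push_neg at h
    have hz : γ = 0 := by
      ext i j
      have h1 := (hC2 i j).trans h
      simpa using le_antisymm h1 (norm_nonneg _)
    rw [hz] at hγdet
    simp at hγdet
  have hC3pos : 0 < C3 := by
    by_contra h
    push_neg at h
    have hz : γ⁻¹ = 0 := by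
      ext i j
      have h1 := (hC3 i j).trans h
      simpa using le_antisymm h1 (norm_nonneg _)
    rw [hz, Matrix.mul_zero] at hMul
    have h2 := congrFun (congrFun hMul (Fin.last m)) (Fin.last m)
    simp [Matrix.one_apply] at h2
  refine ⟨(C2 * C3)⁻¹, by positivity, ?_⟩
  intro ω hω
  obtain ⟨hind, hlast⟩ := hω
  have hξn : 0 < ‖ξ‖ := norm_pos_iff.mpr hξ
  have hωpos : 0 < supNorm ω :=
    lt_of_lt_of_le hξn (by rw [← hlast]; exact le_supNorm ω (Fin.last m))
  -- key per-form estimate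
  have key : ∀ ℓ : Fin (m+1) → K, Unimodular Finf ℓ →
      C3⁻¹ * sInf (Sset Finf ω) ≤ ‖∑ i, ℓ i * γ.mulVec ω i‖ := by
    intro ℓ hℓ
    set ℓ' : Fin (m+1) → K := Matrix.vecMul ℓ γ with hℓ'def
    have hℓ'app : ∀ j, ℓ' j = ∑ i, ℓ i * γ i j := fun j => rfl
    have hsum : ∑ i, ℓ i * γ.mulVec ω i = ∑ j, ℓ' j * ω j := by
      simp only [Matrix.mulVec, dotProduct, hℓ'app, Finset.mul_sum, Finset.sum_mul,
        mul_assoc]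
      exact Finset.sum_comm
    have hlow : 1 ≤ C3 * supNorm ℓ' := by
      have hrec : Matrix.vecMul ℓ' γ⁻¹ = ℓ := by
        rw [hℓ'def, Matrix.vecMul_vecMul, hMul, Matrix.vecMul_one]
      calc (1:ℝ) = supNorm ℓ := hℓ.2.symm
        _ = supNorm (Matrix.vecMul ℓ' γ⁻¹) := by rw [hrec]
        _ ≤ C3 * supNorm ℓ' := vecMul_bound ℓ' γ⁻¹ hC3
    obtain ⟨j₀, hj₀⟩ := exists_supNorm_eq ℓ'
    have hsge : C3⁻¹ ≤ ‖ℓ' j₀‖ := by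
      rw [hj₀] at hlow
      have h2 := mul_le_mul_of_nonneg_left hlow (inv_nonneg.mpr hC3pos.le)
      rwa [mul_one, ← mul_assoc, inv_mul_cancel₀ hC3pos.ne', one_mul] at h2
    have hspos : 0 < ‖ℓ' j₀‖ := lt_of_lt_of_le (inv_pos.mpr hC3pos) hsge
    have hsne : ℓ' j₀ ≠ 0 := norm_pos_iff.mp hspos
    have hℓ'mem : ∀ j, ℓ' j ∈ Finf := by
      intro j; rw [hℓ'app]
      exact Subfield.sum_mem _ (fun i _ => mul_mem (hℓ.1 i) (hγF i j))
    set ℓ'' : Fin (m+1) → K := fun i => (ℓ' j₀)⁻¹ * ℓ' i with hℓ''def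
    have huni : Unimodular Finf ℓ'' := by
      constructor
      · exact fun i => mul_mem (Subfield.inv_mem _ (hℓ'mem j₀)) (hℓ'mem i)
      · rw [hℓ''def, supNorm_smul, norm_inv, hj₀, inv_mul_cancel₀ hspos.ne']
    have hsplit : ∑ j, ℓ' j * ω j = ℓ' j₀ * ∑ j, ℓ'' j * ω j := by
      rw [Finset.mul_sum]
      refine Finset.sum_congr rfl fun j _ => ?_
      rw [hℓ''def]
      field_simp
    have hIle : sInf (Sset Finf ω) ≤ ‖∑ j, ℓ'' j * ω j‖ :=
      csInf_le (Sset_bddBelow Finf ω) ⟨ℓ'', huni, rfl⟩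
    calc C3⁻¹ * sInf (Sset Finf ω) ≤ ‖ℓ' j₀‖ * ‖∑ j, ℓ'' j * ω j‖ :=
        mul_le_mul hsge hIle (Sset_sInf_nonneg Finf ω) (norm_nonneg _)
      _ = ‖∑ j, ℓ' j * ω j‖ := by rw [← norm_mul, ← hsplit]
      _ = ‖∑ i, ℓ i * γ.mulVec ω i‖ := by rw [hsum]
  -- j(γ,ω) ≠ 0
  have hjne : jmap ξ γ ω ≠ 0 := by
    intro h0
    have h0' : ξ⁻¹ * γ.mulVec ω (Fin.last m) = 0 := h0
    have h1 : γ.mulVec ω (Fin.last m) = 0 := by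
      rcases mul_eq_zero.mp h0' with h | h
      · exact absurd h (inv_ne_zero hξ)
      · exact h
    have h2 : ∑ i, γ (Fin.last m) i * ω i = 0 := h1
    have h3 := hind (fun i => γ (Fin.last m) i) (fun i => hγF _ i) h2
    exact hγdet (Matrix.det_eq_zero_of_row_eq_zero (Fin.last m) h3)
  set c : K := (jmap ξ γ ω)⁻¹ with hcdef
  have hcne : c ≠ 0 := inv_ne_zero hjne
  have hcpos : 0 < ‖c‖ := norm_pos_iff.mpr hcne
  have hgact : gact ξ γ ω = fun i => c * γ.mulVec ω i := rfl
  have hwpos : 0 < supNorm (γ.mulVec ω) := by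
    have hb : supNorm ω ≤ C3 * supNorm (γ.mulVec ω) := by
      have hrec : Matrix.mulVec γ⁻¹ (γ.mulVec ω) = ω := by
        rw [Matrix.mulVec_mulVec, hMul', Matrix.one_mulVec]
      calc supNorm ω = supNorm (Matrix.mulVec γ⁻¹ (γ.mulVec ω)) := by rw [hrec]
        _ ≤ C3 * supNorm (γ.mulVec ω) := mulVec_bound γ⁻¹ _ hC3
    nlinarith [supNorm_nonneg (γ.mulVec ω)]
  have hsupg_eq : supNorm (gact ξ γ ω) = ‖c‖ * supNorm (γ.mulVec ω) := by
    rw [hgact, supNorm_smul]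
  have hgpos : 0 < supNorm (gact ξ γ ω) := by rw [hsupg_eq]; positivity
  have hsupg : supNorm (gact ξ γ ω) ≤ ‖c‖ * (C2 * supNorm ω) := by
    rw [hsupg_eq]
    exact mul_le_mul_of_nonneg_left (mulVec_bound γ ω hC2) (norm_nonneg c)
  have hIg : ‖c‖ * (C3⁻¹ * sInf (Sset Finf ω)) ≤ sInf (Sset Finf (gact ξ γ ω)) := by
    refine le_csInf (Sset_nonempty Finf _) ?_
    rintro x ⟨ℓ, hℓ, rfl⟩
    have hx : ∑ i, ℓ i * gact ξ γ ω i = c * ∑ i, ℓ i * γ.mulVec ω i := by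
      rw [hgact, Finset.mul_sum]
      exact Finset.sum_congr rfl fun i _ => by ring
    rw [hx, norm_mul]
    exact mul_le_mul_of_nonneg_left (key ℓ hℓ) (norm_nonneg c)
  have hinv : (‖c‖ * (C2 * supNorm ω))⁻¹ ≤ (supNorm (gact ξ γ ω))⁻¹ :=
    inv_anti₀ hgpos hsupg
  have hfinal : (‖c‖ * (C2 * supNorm ω))⁻¹ * (‖c‖ * (C3⁻¹ * sInf (Sset Finf ω)))
      ≤ hOm Finf (gact ξ γ ω) := by
    rw [hOm_eq]
    exact mul_le_mul hinv hIg
      (mul_nonneg (norm_nonneg c)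
        (mul_nonneg (inv_nonneg.mpr hC3pos.le) (Sset_sInf_nonneg Finf ω)))
      (inv_nonneg.mpr (supNorm_nonneg _))
  calc (C2 * C3)⁻¹ * hOm Finf ω
      = (‖c‖ * (C2 * supNorm ω))⁻¹ * (‖c‖ * (C3⁻¹ * sInf (Sset Finf ω))) := by
        rw [hOm_eq]
        field_simp
    _ ≤ hOm Finf (gact ξ γ ω) := hfinal


end Paper
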